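/- Let a_{kj} ∈ C¹(ℝ³;ℝ) with a_{kj} = a_{jk}, let κ : ℝ³ → ℝ be continuous, ω ∈ ℝ, and let χ ∈ C²(ℝ³;ℝ) be compactly supported with χ(0) = 1. For x ≠ y define R(x,y) := −(1/(4π)) Σ_{k,j} { ∂_{x_k}[ ∂_{x_j}χ(x−y) · a_{kj}(x)/|x−y| ] + ∂_{x_k}[ a_{kj}(x) χ(x−y) ] · ∂_{x_j}(1/|x−y|) + a_{kj}(x) (χ(x−y)−1) ∂_{x_k}∂_{x_j}(1/|x−y|) } − ω² κ(x) χ(x−y)/(4π|x−y|), and R̃(x,y) := R(x,y) − (1/(4π)) Σ_{k,j} ( a_{kj}(x) − a_{kj}(y) ) ∂_{x_k}∂_{x_j}(1/|x−y|). Then R and R̃ have only weak singularities on the diagonal: for every compact set K ⊂ ℝ³ there exists C > 0 such that |R(x,y)| ≤ C |x−y|^{−2} and |R̃(x,y)| ≤ C |x−y|^{−2} for all x, y ∈ K with x ≠ y. -/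

import Mathlib

open MeasureTheory Filter
open scoped Topology BigOperators

noncomputable section

/-- Three-dimensional Euclidean space. -/
abbrev E3 := EuclideanSpace ℝ (Fin 3)

/-- `∂_j(1/|z|) = −z_j/|z|³` for `z ≠ 0`. -/
def d1 (z : E3) (j : Fin 3) : ℝ := -z j / ‖z‖ ^ 3

/-- `∂_k∂_j(1/|z|) = (3z_kz_j − δ_{kj}|z|²)/|z|⁵` for `z ≠ 0`. -/
def d2 (z : E3) (k j : Fin 3) : ℝ :=
  (3 * z k * z j - (if k = j then (1 : ℝ) else 0) * ‖z‖ ^ 2) / ‖z‖ ^ 5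

/-- The remainder kernel `R(x,y)` arising in the decomposition of
`A₂(x,∂_x)P_χ(x−y)` for the localized quasi-parametrix `P_χ(x) = −χ(x)/(4π|x|)`. -/
def Rker (a : Fin 3 → Fin 3 → E3 → ℝ) (κ : E3 → ℝ) (ω : ℝ) (χ : E3 → ℝ)
    (x y : E3) : ℝ :=
  -(1 / (4 * Real.pi)) * ∑ k : Fin 3, ∑ j : Fin 3,
      (fderiv ℝ (fun w : E3 =>
          fderiv ℝ χ (w - y) (EuclideanSpace.single j 1) * a k j w / ‖w - y‖)
          x (EuclideanSpace.single k 1)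
        + fderiv ℝ (fun w : E3 => a k j w * χ (w - y)) x (EuclideanSpace.single k 1)
            * d1 (x - y) j
        + a k j x * (χ (x - y) - 1) * d2 (x - y) k j)
    - ω ^ 2 * κ x * χ (x - y) / (4 * Real.pi * ‖x - y‖)

/-- The modified remainder kernel
`R̃(x,y) = R(x,y) − (1/4π) Σ (a_{kj}(x) − a_{kj}(y)) ∂_k∂_j(1/|x−y|)`. -/
def Rtker (a : Fin 3 → Fin 3 → E3 → ℝ) (κ : E3 → ℝ) (ω : ℝ) (χ : E3 → ℝ)
    (x y : E3) : ℝ :=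
  Rker a κ ω χ x y -
    (1 / (4 * Real.pi)) * ∑ k : Fin 3, ∑ j : Fin 3,
      (a k j x - a k j y) * d2 (x - y) k j

lemma coord_le_norm (z : E3) (i : Fin 3) : |z i| ≤ ‖z‖ := by
  have h := abs_real_inner_le_norm (EuclideanSpace.single i (1:ℝ)) z
  simpa [EuclideanSpace.inner_single_left, EuclideanSpace.norm_single] using h

lemma d1_bound {z : E3} (hz : z ≠ 0) (j : Fin 3) : |d1 z j| ≤ ‖z‖⁻¹ ^ 2 := by
  have hz0 : (0:ℝ) < ‖z‖ := norm_pos_iff.2 hz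
  have h1 : |d1 z j| = |z j| / ‖z‖ ^ 3 := by
    rw [d1, abs_div, abs_neg, abs_of_nonneg (by positivity : (0:ℝ) ≤ ‖z‖^3)]
  rw [h1, inv_pow, ← one_div, div_le_div_iff₀ (by positivity) (by positivity)]
  calc |z j| * ‖z‖ ^ 2 ≤ ‖z‖ * ‖z‖ ^ 2 := by
        gcongr; exact coord_le_norm z j
  _ = 1 * ‖z‖ ^ 3 := by ring

lemma d2_bound {z : E3} (hz : z ≠ 0) (k j : Fin 3) : |d2 z k j| ≤ 4 * ‖z‖⁻¹ ^ 3 := by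
  have hz0 : (0:ℝ) < ‖z‖ := norm_pos_iff.2 hz
  have hnum : |3 * z k * z j - (if k = j then (1 : ℝ) else 0) * ‖z‖ ^ 2| ≤ 4 * ‖z‖ ^ 2 := by
    calc |3 * z k * z j - (if k = j then (1 : ℝ) else 0) * ‖z‖ ^ 2|
        ≤ |3 * z k * z j| + |(if k = j then (1 : ℝ) else 0) * ‖z‖ ^ 2| := abs_sub _ _
    _ ≤ 3 * ‖z‖ ^ 2 + ‖z‖ ^ 2 := by
        gcongr
        · calc |3 * z k * z j| = 3 * (|z k| * |z j|) := by
                rw [abs_mul, abs_mul]; simp [abs_of_nonneg]; ring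
          _ ≤ 3 * (‖z‖ * ‖z‖) := by gcongr <;> [exact coord_le_norm z k; exact coord_le_norm z j]
          _ = 3 * ‖z‖ ^ 2 := by ring
        · rw [abs_mul]
          have h1 : |if k = j then (1:ℝ) else 0| ≤ 1 := by split <;> simp
          have h2 : |‖z‖ ^ 2| = ‖z‖ ^ 2 := abs_of_nonneg (by positivity)
          calc |if k = j then (1:ℝ) else 0| * |‖z‖ ^ 2| ≤ 1 * ‖z‖ ^ 2 :=
                mul_le_mul h1 (le_of_eq h2) (abs_nonneg _) zero_le_one
          _ = ‖z‖ ^ 2 := one_mul _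
    _ = 4 * ‖z‖ ^ 2 := by ring
  rw [d2, abs_div, abs_of_nonneg (by positivity : (0:ℝ) ≤ ‖z‖^5), inv_pow, ← one_div,
    div_le_iff₀ (by positivity)]
  calc |3 * z k * z j - (if k = j then (1 : ℝ) else 0) * ‖z‖ ^ 2| ≤ 4 * ‖z‖ ^ 2 := hnum
  _ = 4 * (1 / ‖z‖ ^ 3) * ‖z‖ ^ 5 := by field_simp

lemma normD_lip (y : E3) : LipschitzWith 1 (fun w : E3 => ‖w - y‖) := by
  apply LipschitzWith.of_dist_le_mul
  intro w w'
  simp only [dist_eq_norm, NNReal.coe_one, one_mul, Real.dist_eq]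
  calc |‖w - y‖ - ‖w' - y‖| ≤ ‖(w - y) - (w' - y)‖ := abs_norm_sub_norm_le _ _
  _ = ‖w - w'‖ := by rw [sub_sub_sub_cancel_right]

-- derivative facts, fixed y, x ≠ y
section
variable (χ : E3 → ℝ) (hχ : ContDiff ℝ 2 χ) (akj : E3 → ℝ) (ha : ContDiff ℝ 1 akj)
  (y x : E3) (hxy : x ≠ y) (j k : Fin 3)

lemma term1_bound (hχ : ContDiff ℝ 2 χ) (ha : ContDiff ℝ 1 akj) (hxy : x ≠ y) :
    |fderiv ℝ (fun w : E3 => fderiv ℝ χ (w - y) (EuclideanSpace.single j 1) * akj w / ‖w - y‖)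
        x (EuclideanSpace.single k 1)|
      ≤ (‖fderiv ℝ χ (x - y)‖ * |akj x|) * ‖x - y‖⁻¹ ^ 2
        + ‖x - y‖⁻¹ * (‖fderiv ℝ χ (x - y)‖ * ‖fderiv ℝ akj x‖
            + |akj x| * ‖fderiv ℝ (fderiv ℝ χ) (x - y)‖) := by
  have hz : x - y ≠ 0 := sub_ne_zero.2 hxy
  have hr : (0:ℝ) < ‖x - y‖ := norm_pos_iff.2 hz
  have hsub : HasFDerivAt (fun w : E3 => w - y) (ContinuousLinearMap.id ℝ E3) x :=
    (hasFDerivAt_id x).sub_const y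
  -- norm function
  have hDdiff : DifferentiableAt ℝ (fun w : E3 => ‖w - y‖) x := by
    have h1 : DifferentiableAt ℝ (fun z : E3 => ‖z‖) (x - y) :=
      (contDiffAt_norm ℝ (n := 1) hz).differentiableAt one_ne_zero
    exact h1.comp x hsub.differentiableAt
  set D' := fderiv ℝ (fun w : E3 => ‖w - y‖) x with hD'def
  have hD : HasFDerivAt (fun w : E3 => ‖w - y‖) D' x := hDdiff.hasFDerivAt
  have hD'n : ‖D'‖ ≤ 1 := by
    have := hD.le_of_lipschitz (normD_lip y)
    simpa using this
  -- inverse of norm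
  have hDinv : HasFDerivAt (fun w : E3 => ‖w - y‖⁻¹) ((-(‖x - y‖ ^ 2)⁻¹) • D') x := by
    have h1 : HasDerivAt (fun t : ℝ => t⁻¹) (-(‖x - y‖ ^ 2)⁻¹) ‖x - y‖ := hasDerivAt_inv hr.ne'
    exact h1.comp_hasFDerivAt x hD
  -- second derivative of χ
  have hdχ : ContDiff ℝ 1 (fderiv ℝ χ) := hχ.fderiv_right (by norm_num)
  have hG : HasFDerivAt (fderiv ℝ χ) (fderiv ℝ (fderiv ℝ χ) (x - y)) (x - y) :=
    ((hdχ.differentiable one_ne_zero) (x - y)).hasFDerivAt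
  have hH : HasFDerivAt (fun w : E3 => fderiv ℝ χ (w - y))
      ((fderiv ℝ (fderiv ℝ χ) (x - y)).comp (ContinuousLinearMap.id ℝ E3)) x :=
    hG.comp x hsub
  have hF : HasFDerivAt (fun w : E3 => fderiv ℝ χ (w - y) (EuclideanSpace.single j 1))
      ((fderiv ℝ χ (x - y)).comp 0
        + ((fderiv ℝ (fderiv ℝ χ) (x - y)).comp (ContinuousLinearMap.id ℝ E3)).flip
            (EuclideanSpace.single j 1)) x :=
    hH.clm_apply (hasFDerivAt_const _ x)
  have ha' : HasFDerivAt akj (fderiv ℝ akj x) x := ((ha.differentiable one_ne_zero) x).hasFDerivAt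
  set F' := (fderiv ℝ χ (x - y)).comp (0 : E3 →L[ℝ] E3)
        + ((fderiv ℝ (fderiv ℝ χ) (x - y)).comp (ContinuousLinearMap.id ℝ E3)).flip
            (EuclideanSpace.single j 1) with hF'def
  set N' := fderiv ℝ χ (x - y) (EuclideanSpace.single j 1) • fderiv ℝ akj x + akj x • F'
    with hN'def
  have hN : HasFDerivAt (fun w : E3 => fderiv ℝ χ (w - y) (EuclideanSpace.single j 1) * akj w)
      N' x := hF.mul ha'
  have hf1 : HasFDerivAt
      (fun w : E3 => fderiv ℝ χ (w - y) (EuclideanSpace.single j 1) * akj w / ‖w - y‖)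
      ((fderiv ℝ χ (x - y) (EuclideanSpace.single j 1) * akj x) • ((-(‖x - y‖ ^ 2)⁻¹) • D')
        + ‖x - y‖⁻¹ • N') x := by
    simp only [div_eq_mul_inv]
    exact hN.mul hDinv
  rw [hf1.fderiv]
  have hej : ‖(EuclideanSpace.single j (1:ℝ) : E3)‖ = 1 := by
    rw [EuclideanSpace.norm_single]; simp
  have hek : ‖(EuclideanSpace.single k (1:ℝ) : E3)‖ = 1 := by
    rw [EuclideanSpace.norm_single]; simp
  have hFx : |fderiv ℝ χ (x - y) (EuclideanSpace.single j 1)| ≤ ‖fderiv ℝ χ (x - y)‖ := by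
    have := (fderiv ℝ χ (x - y)).le_opNorm (EuclideanSpace.single j 1)
    simpa [hej] using this
  have hF'k : |F' (EuclideanSpace.single k 1)| ≤ ‖fderiv ℝ (fderiv ℝ χ) (x - y)‖ := by
    rw [hF'def]
    simp only [ContinuousLinearMap.add_apply, ContinuousLinearMap.comp_apply,
      ContinuousLinearMap.zero_apply, map_zero, ContinuousLinearMap.flip_apply,
      ContinuousLinearMap.coe_id', id_eq, zero_add]
    calc |fderiv ℝ (fderiv ℝ χ) (x - y) (EuclideanSpace.single k 1) (EuclideanSpace.single j 1)|
        ≤ ‖fderiv ℝ (fderiv ℝ χ) (x - y) (EuclideanSpace.single k 1)‖ * ‖(EuclideanSpace.single j (1:ℝ) : E3)‖ :=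
          (fderiv ℝ (fderiv ℝ χ) (x - y) (EuclideanSpace.single k 1)).le_opNorm _
    _ ≤ (‖fderiv ℝ (fderiv ℝ χ) (x - y)‖ * ‖(EuclideanSpace.single k (1:ℝ) : E3)‖) * 1 := by
        rw [hej]
        gcongr
        exact (fderiv ℝ (fderiv ℝ χ) (x - y)).le_opNorm _
    _ = ‖fderiv ℝ (fderiv ℝ χ) (x - y)‖ := by rw [hek]; ring
  have hDk : |D' (EuclideanSpace.single k 1)| ≤ 1 := by
    calc |D' (EuclideanSpace.single k 1)| ≤ ‖D'‖ * ‖(EuclideanSpace.single k (1:ℝ) : E3)‖ :=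
          D'.le_opNorm _
    _ ≤ 1 * 1 := by rw [hek]; gcongr
    _ = 1 := one_mul 1
  have hNk : |N' (EuclideanSpace.single k 1)|
      ≤ ‖fderiv ℝ χ (x - y)‖ * ‖fderiv ℝ akj x‖ + |akj x| * ‖fderiv ℝ (fderiv ℝ χ) (x - y)‖ := by
    rw [hN'def]
    simp only [ContinuousLinearMap.add_apply, ContinuousLinearMap.smul_apply, smul_eq_mul]
    calc |fderiv ℝ χ (x - y) (EuclideanSpace.single j 1) * fderiv ℝ akj x (EuclideanSpace.single k 1)
            + akj x * F' (EuclideanSpace.single k 1)|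
        ≤ |fderiv ℝ χ (x - y) (EuclideanSpace.single j 1)| * |fderiv ℝ akj x (EuclideanSpace.single k 1)|
            + |akj x| * |F' (EuclideanSpace.single k 1)| := by
          rw [← abs_mul, ← abs_mul]; exact abs_add_le _ _
    _ ≤ ‖fderiv ℝ χ (x - y)‖ * ‖fderiv ℝ akj x‖ + |akj x| * ‖fderiv ℝ (fderiv ℝ χ) (x - y)‖ := by
        have ha'k : |fderiv ℝ akj x (EuclideanSpace.single k 1)| ≤ ‖fderiv ℝ akj x‖ := by
          have := (fderiv ℝ akj x).le_opNorm (EuclideanSpace.single k 1)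
          simpa [hek] using this
        exact add_le_add (mul_le_mul hFx ha'k (abs_nonneg _) (norm_nonneg _))
          (mul_le_mul_of_nonneg_left hF'k (abs_nonneg _))
  simp only [ContinuousLinearMap.add_apply, ContinuousLinearMap.smul_apply, smul_eq_mul]
  have hinv : (0:ℝ) ≤ ‖x - y‖⁻¹ := by positivity
  calc |fderiv ℝ χ (x - y) (EuclideanSpace.single j 1) * akj x
          * (-(‖x - y‖ ^ 2)⁻¹ * D' (EuclideanSpace.single k 1))
        + ‖x - y‖⁻¹ * N' (EuclideanSpace.single k 1)|
      ≤ |fderiv ℝ χ (x - y) (EuclideanSpace.single j 1)| * |akj x|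
          * ((‖x - y‖ ^ 2)⁻¹ * |D' (EuclideanSpace.single k 1)|)
        + ‖x - y‖⁻¹ * |N' (EuclideanSpace.single k 1)| := by
        have h := abs_add_le (fderiv ℝ χ (x - y) (EuclideanSpace.single j 1) * akj x
            * (-(‖x - y‖ ^ 2)⁻¹ * D' (EuclideanSpace.single k 1)))
          (‖x - y‖⁻¹ * N' (EuclideanSpace.single k 1))
        refine h.trans (le_of_eq ?_)
        rw [abs_mul, abs_mul, abs_mul, abs_mul, abs_neg, abs_inv, abs_of_nonneg (by positivity : (0:ℝ) ≤ ‖x - y‖ ^ 2), abs_of_nonneg hinv]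
    _ ≤ ‖fderiv ℝ χ (x - y)‖ * |akj x| * ((‖x - y‖ ^ 2)⁻¹ * 1)
        + ‖x - y‖⁻¹ * (‖fderiv ℝ χ (x - y)‖ * ‖fderiv ℝ akj x‖
            + |akj x| * ‖fderiv ℝ (fderiv ℝ χ) (x - y)‖) := by gcongr
    _ = (‖fderiv ℝ χ (x - y)‖ * |akj x|) * ‖x - y‖⁻¹ ^ 2
        + ‖x - y‖⁻¹ * (‖fderiv ℝ χ (x - y)‖ * ‖fderiv ℝ akj x‖
            + |akj x| * ‖fderiv ℝ (fderiv ℝ χ) (x - y)‖) := by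
        rw [mul_one, inv_pow]

end

section
variable (χ : E3 → ℝ) (akj : E3 → ℝ) (y x : E3) (k : Fin 3)

lemma term2_bound (hχ : ContDiff ℝ 2 χ) (ha : ContDiff ℝ 1 akj) :
    |fderiv ℝ (fun w : E3 => akj w * χ (w - y)) x (EuclideanSpace.single k 1)|
      ≤ |akj x| * ‖fderiv ℝ χ (x - y)‖ + |χ (x - y)| * ‖fderiv ℝ akj x‖ := by
  have hek : ‖(EuclideanSpace.single k (1:ℝ) : E3)‖ = 1 := by
    rw [EuclideanSpace.norm_single]; simp
  have hsub : HasFDerivAt (fun w : E3 => w - y) (ContinuousLinearMap.id ℝ E3) x :=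
    (hasFDerivAt_id x).sub_const y
  have hχ1 : HasFDerivAt (fun w : E3 => χ (w - y))
      ((fderiv ℝ χ (x - y)).comp (ContinuousLinearMap.id ℝ E3)) x :=
    (((hχ.differentiable two_ne_zero) (x - y)).hasFDerivAt).comp x hsub
  have ha' : HasFDerivAt akj (fderiv ℝ akj x) x := ((ha.differentiable one_ne_zero) x).hasFDerivAt
  have hm : HasFDerivAt (fun w : E3 => akj w * χ (w - y)) _ x := ha'.mul hχ1
  rw [hm.fderiv]
  simp only [ContinuousLinearMap.add_apply, ContinuousLinearMap.smul_apply, smul_eq_mul,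
    ContinuousLinearMap.comp_apply, ContinuousLinearMap.coe_id', id_eq]
  have h1 : |fderiv ℝ χ (x - y) (EuclideanSpace.single k 1)| ≤ ‖fderiv ℝ χ (x - y)‖ := by
    have := (fderiv ℝ χ (x - y)).le_opNorm (EuclideanSpace.single k 1)
    simpa [hek] using this
  have h2 : |fderiv ℝ akj x (EuclideanSpace.single k 1)| ≤ ‖fderiv ℝ akj x‖ := by
    have := (fderiv ℝ akj x).le_opNorm (EuclideanSpace.single k 1)
    simpa [hek] using this
  calc |akj x * fderiv ℝ χ (x - y) (EuclideanSpace.single k 1)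
        + χ (x - y) * fderiv ℝ akj x (EuclideanSpace.single k 1)|
      ≤ |akj x| * |fderiv ℝ χ (x - y) (EuclideanSpace.single k 1)|
        + |χ (x - y)| * |fderiv ℝ akj x (EuclideanSpace.single k 1)| := by
        rw [← abs_mul, ← abs_mul]; exact abs_add_le _ _
  _ ≤ |akj x| * ‖fderiv ℝ χ (x - y)‖ + |χ (x - y)| * ‖fderiv ℝ akj x‖ :=
      add_le_add (mul_le_mul_of_nonneg_left h1 (abs_nonneg _))
        (mul_le_mul_of_nonneg_left h2 (abs_nonneg _))
end


set_option maxHeartbeats 1000000 in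
theorem stmt13 (a : Fin 3 → Fin 3 → E3 → ℝ)
    (haC : ∀ k j, ContDiff ℝ 1 (a k j)) (hsym : ∀ k j, a k j = a j k)
    (κ : E3 → ℝ) (hκ : Continuous κ) (ω : ℝ)
    (χ : E3 → ℝ) (hχ : ContDiff ℝ 2 χ) (hχc : HasCompactSupport χ) (hχ0 : χ 0 = 1) :
    ∀ K : Set E3, IsCompact K → ∃ C > (0 : ℝ), ∀ x ∈ K, ∀ y ∈ K, x ≠ y →
      |Rker a κ ω χ x y| ≤ C * ‖x - y‖⁻¹ ^ 2 ∧
      |Rtker a κ ω χ x y| ≤ C * ‖x - y‖⁻¹ ^ 2 := by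
  intro K hK
  obtain ⟨ρ₀, hρ₀⟩ := hK.isBounded.subset_closedBall 0
  set ρ : ℝ := max ρ₀ 1 with hρdef
  have hρ1 : (1:ℝ) ≤ ρ := le_max_right _ _
  have hρpos : (0:ℝ) < ρ := lt_of_lt_of_le one_pos hρ1
  have hKB : K ⊆ Metric.closedBall 0 ρ :=
    hρ₀.trans (Metric.closedBall_subset_closedBall (le_max_left _ _))
  set B := Metric.closedBall (0:E3) ρ with hBdef
  have hBcomp : IsCompact B := isCompact_closedBall 0 ρ
  have hBconv : Convex ℝ B := convex_closedBall 0 ρ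
  set S := Metric.closedBall (0:E3) (2*ρ) with hSdef
  have hScomp : IsCompact S := isCompact_closedBall 0 (2*ρ)
  have hmemS : ∀ x ∈ K, ∀ y ∈ K, x - y ∈ S := by
    intro x hx y hy
    have hx' : ‖x‖ ≤ ρ := by
      simpa [hBdef, Metric.mem_closedBall, dist_zero_right] using hKB hx
    have hy' : ‖y‖ ≤ ρ := by
      simpa [hBdef, Metric.mem_closedBall, dist_zero_right] using hKB hy
    rw [hSdef, Metric.mem_closedBall, dist_zero_right]
    calc ‖x - y‖ ≤ ‖x‖ + ‖y‖ := norm_sub_le _ _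
    _ ≤ ρ + ρ := add_le_add hx' hy'
    _ = 2*ρ := by ring
  -- smoothness
  have hχ1 : ContDiff ℝ 1 χ := hχ.of_le one_le_two
  have hdχ : ContDiff ℝ 1 (fderiv ℝ χ) := hχ.fderiv_right (by norm_num)
  -- constants
  obtain ⟨c0, hc0⟩ := hScomp.exists_bound_of_continuousOn hχ.continuous.continuousOn
  obtain ⟨c1, hc1⟩ := hScomp.exists_bound_of_continuousOn hdχ.continuous.continuousOn
  obtain ⟨c2, hc2⟩ :=
    hScomp.exists_bound_of_continuousOn (hdχ.continuous_fderiv one_ne_zero).continuousOn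
  obtain ⟨cκ, hcκ⟩ := hBcomp.exists_bound_of_continuousOn hκ.continuousOn
  set C0 : ℝ := max c0 0 with hC0def
  set C1 : ℝ := max c1 0 with hC1def
  set C2 : ℝ := max c2 0 with hC2def
  set Cκ : ℝ := max cκ 0 with hCκdef
  have hC0 : (0:ℝ) ≤ C0 := le_max_right _ _
  have hC1 : (0:ℝ) ≤ C1 := le_max_right _ _
  have hC2 : (0:ℝ) ≤ C2 := le_max_right _ _
  have hCκ0 : (0:ℝ) ≤ Cκ := le_max_right _ _
  have hχS : ∀ z ∈ S, |χ z| ≤ C0 := fun z hz =>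
    le_trans (by simpa using hc0 z hz) (le_max_left _ _)
  have hdχS : ∀ z ∈ S, ‖fderiv ℝ χ z‖ ≤ C1 := fun z hz =>
    le_trans (hc1 z hz) (le_max_left _ _)
  have hddχS : ∀ z ∈ S, ‖fderiv ℝ (fderiv ℝ χ) z‖ ≤ C2 := fun z hz =>
    le_trans (hc2 z hz) (le_max_left _ _)
  have hκB : ∀ z ∈ B, |κ z| ≤ Cκ := fun z hz =>
    le_trans (by simpa using hcκ z hz) (le_max_left _ _)
  -- bounds for a and its derivative on B
  have hsumcont : Continuous (fun z : E3 => ∑ k : Fin 3, ∑ j : Fin 3, |a k j z|) := by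
    apply continuous_finset_sum; intro k _
    apply continuous_finset_sum; intro j _
    exact (haC k j).continuous.abs
  obtain ⟨ca, hca⟩ := hBcomp.exists_bound_of_continuousOn hsumcont.continuousOn
  set Ca : ℝ := max ca 0 with hCadef
  have hCa : (0:ℝ) ≤ Ca := le_max_right _ _
  have haB : ∀ (k j : Fin 3), ∀ z ∈ B, |a k j z| ≤ Ca := by
    intro k j z hz
    have h1 : |a k j z| ≤ ∑ j' : Fin 3, |a k j' z| :=
      Finset.single_le_sum (f := fun j' => |a k j' z|) (fun i _ => abs_nonneg _)
        (Finset.mem_univ j)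
    have h2 : (∑ j' : Fin 3, |a k j' z|) ≤ ∑ k' : Fin 3, ∑ j' : Fin 3, |a k' j' z| :=
      Finset.single_le_sum (f := fun k' => ∑ j' : Fin 3, |a k' j' z|)
        (fun i _ => Finset.sum_nonneg fun _ _ => abs_nonneg _) (Finset.mem_univ k)
    have h3 := hca z hz
    rw [Real.norm_eq_abs] at h3
    have h4 := le_abs_self (∑ k' : Fin 3, ∑ j' : Fin 3, |a k' j' z|)
    exact le_trans (le_trans h1 h2) (le_trans (le_trans h4 h3) (le_max_left _ _))
  have hdsumcont : Continuous (fun z : E3 => ∑ k : Fin 3, ∑ j : Fin 3, ‖fderiv ℝ (a k j) z‖) := by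
    apply continuous_finset_sum; intro k _
    apply continuous_finset_sum; intro j _
    exact ((haC k j).continuous_fderiv one_ne_zero).norm
  obtain ⟨ca1, hca1⟩ := hBcomp.exists_bound_of_continuousOn hdsumcont.continuousOn
  set Ca1 : ℝ := max ca1 0 with hCa1def
  have hCa1 : (0:ℝ) ≤ Ca1 := le_max_right _ _
  have hdaB : ∀ (k j : Fin 3), ∀ z ∈ B, ‖fderiv ℝ (a k j) z‖ ≤ Ca1 := by
    intro k j z hz
    have h1 : ‖fderiv ℝ (a k j) z‖ ≤ ∑ j' : Fin 3, ‖fderiv ℝ (a k j') z‖ :=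
      Finset.single_le_sum (f := fun j' => ‖fderiv ℝ (a k j') z‖)
        (fun i _ => norm_nonneg _) (Finset.mem_univ j)
    have h2 : (∑ j' : Fin 3, ‖fderiv ℝ (a k j') z‖)
        ≤ ∑ k' : Fin 3, ∑ j' : Fin 3, ‖fderiv ℝ (a k' j') z‖ :=
      Finset.single_le_sum (f := fun k' => ∑ j' : Fin 3, ‖fderiv ℝ (a k' j') z‖)
        (fun i _ => Finset.sum_nonneg fun _ _ => norm_nonneg _) (Finset.mem_univ k)
    have h3 := hca1 z hz
    rw [Real.norm_eq_abs] at h3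
    have h4 : (∑ k' : Fin 3, ∑ j' : Fin 3, ‖fderiv ℝ (a k' j') z‖)
        ≤ |∑ k' : Fin 3, ∑ j' : Fin 3, ‖fderiv ℝ (a k' j') z‖| := le_abs_self _
    exact le_trans (le_trans h1 h2) (le_trans (le_trans h4 h3) (le_max_left _ _))
  -- Lipschitz constant of χ
  obtain ⟨Lχ, hLχ⟩ := hχ.lipschitzWith_of_hasCompactSupport hχc two_ne_zero
  have hLχ0 : (0:ℝ) ≤ (Lχ:ℝ) := Lχ.coe_nonneg
  have hχ1bound : ∀ z : E3, |χ z - 1| ≤ (Lχ : ℝ) * ‖z‖ := by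
    intro z
    have := hLχ.dist_le_mul z 0
    simpa [Real.dist_eq, hχ0, dist_zero_right] using this
  -- Lipschitz bound for a on B
  have haLip : ∀ (k j : Fin 3), ∀ x ∈ B, ∀ y ∈ B, |a k j x - a k j y| ≤ Ca1 * ‖x - y‖ := by
    intro k j x hx y hy
    have := Convex.norm_image_sub_le_of_norm_fderiv_le
      (f := a k j) (C := Ca1) (s := B)
      (fun z _ => ((haC k j).differentiable one_ne_zero) z) (fun z hz => hdaB k j z hz)
      hBconv hy hx
    simpa [Real.norm_eq_abs] using this
  -- the big constant
  set M : ℝ := (C1*Ca + 2*ρ*(C1*Ca1 + Ca*C2)) + (Ca*C1 + C0*Ca1) + 4*Ca*(Lχ:ℝ) with hMdef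
  have hM : (0:ℝ) ≤ M := by
    refine add_nonneg (add_nonneg ?_ ?_) ?_
    · exact add_nonneg (mul_nonneg hC1 hCa)
        (mul_nonneg (by linarith) (add_nonneg (mul_nonneg hC1 hCa1) (mul_nonneg hCa hC2)))
    · exact add_nonneg (mul_nonneg hCa hC1) (mul_nonneg hC0 hCa1)
    · exact mul_nonneg (mul_nonneg (by norm_num) hCa) hLχ0
  have hω : (0:ℝ) ≤ ω^2*Cκ*C0*(2*ρ) :=
    mul_nonneg (mul_nonneg (mul_nonneg (sq_nonneg ω) hCκ0) hC0) (by linarith)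
  set Cfin : ℝ := (1/(4*Real.pi)) * (9*M + ω^2*Cκ*C0*(2*ρ) + 36*Ca1) + 1 with hCfin
  have hπ : (0:ℝ) < 4*Real.pi := by positivity
  have hπ' : (0:ℝ) < 1/(4*Real.pi) := by positivity
  have hCoef : (0:ℝ) ≤ (1/(4*Real.pi)) * (9*M + ω^2*Cκ*C0*(2*ρ) + 36*Ca1) :=
    mul_nonneg hπ'.le (by linarith)
  refine ⟨Cfin, by rw [hCfin]; linarith, ?_⟩
  intro x hx y hy hxy
  have hz : x - y ≠ 0 := sub_ne_zero.2 hxy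
  have hr : (0:ℝ) < ‖x - y‖ := norm_pos_iff.2 hz
  have hzS : x - y ∈ S := hmemS x hx y hy
  have hxB : x ∈ B := hKB hx
  have hyB : y ∈ B := hKB hy
  have hr2ρ : ‖x - y‖ ≤ 2*ρ := by
    have := hzS
    rw [hSdef, Metric.mem_closedBall, dist_zero_right] at this
    exact this
  set r : ℝ := ‖x - y‖ with hrdef
  have hrinv : r⁻¹ = r * r⁻¹^2 := by
    rw [pow_two, ← mul_assoc, mul_inv_cancel₀ hr.ne', one_mul]
  have hrr3 : r * r⁻¹^3 = r⁻¹^2 := by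
    have h3 : r⁻¹^3 = r⁻¹^2 * r⁻¹ := pow_succ _ 2
    rw [h3, mul_comm (r⁻¹^2) (r⁻¹), ← mul_assoc, mul_inv_cancel₀ hr.ne', one_mul]
  -- per-summand bound
  have hsummand : ∀ k j : Fin 3,
      |fderiv ℝ (fun w : E3 =>
          fderiv ℝ χ (w - y) (EuclideanSpace.single j 1) * a k j w / ‖w - y‖)
          x (EuclideanSpace.single k 1)
        + fderiv ℝ (fun w : E3 => a k j w * χ (w - y)) x (EuclideanSpace.single k 1)
            * d1 (x - y) j
        + a k j x * (χ (x - y) - 1) * d2 (x - y) k j| ≤ M * r⁻¹^2 := by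
    intro k j
    have ht1 : |fderiv ℝ (fun w : E3 =>
          fderiv ℝ χ (w - y) (EuclideanSpace.single j 1) * a k j w / ‖w - y‖)
          x (EuclideanSpace.single k 1)|
        ≤ (C1*Ca + 2*ρ*(C1*Ca1 + Ca*C2)) * r⁻¹^2 := by
      have h := term1_bound χ (a k j) y x j k hχ (haC k j) hxy
      have hb1 : ‖fderiv ℝ χ (x - y)‖ * |a k j x| ≤ C1 * Ca :=
        mul_le_mul (hdχS _ hzS) (haB k j x hxB) (abs_nonneg _) hC1
      have hb2 : ‖fderiv ℝ χ (x - y)‖ * ‖fderiv ℝ (a k j) x‖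
          + |a k j x| * ‖fderiv ℝ (fderiv ℝ χ) (x - y)‖ ≤ C1*Ca1 + Ca*C2 :=
        add_le_add (mul_le_mul (hdχS _ hzS) (hdaB k j x hxB) (norm_nonneg _) hC1)
          (mul_le_mul (haB k j x hxB) (hddχS _ hzS) (by positivity) hCa)
      refine h.trans ?_
      have hi2 : (0:ℝ) ≤ r⁻¹^2 := by positivity
      have hi1 : (0:ℝ) ≤ r⁻¹ := by positivity
      calc (‖fderiv ℝ χ (x - y)‖ * |a k j x|) * r⁻¹ ^ 2
            + r⁻¹ * (‖fderiv ℝ χ (x - y)‖ * ‖fderiv ℝ (a k j) x‖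
              + |a k j x| * ‖fderiv ℝ (fderiv ℝ χ) (x - y)‖)
          ≤ (C1*Ca) * r⁻¹^2 + r⁻¹ * (C1*Ca1 + Ca*C2) :=
          add_le_add (mul_le_mul_of_nonneg_right hb1 hi2)
            (mul_le_mul_of_nonneg_left hb2 hi1)
      _ ≤ (C1*Ca) * r⁻¹^2 + (2*ρ) * (C1*Ca1 + Ca*C2) * r⁻¹^2 := by
          have hnn : (0:ℝ) ≤ C1*Ca1 + Ca*C2 :=
            add_nonneg (mul_nonneg hC1 hCa1) (mul_nonneg hCa hC2)
          have h2 : r * (C1*Ca1 + Ca*C2) ≤ (2*ρ) * (C1*Ca1 + Ca*C2) :=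
            mul_le_mul_of_nonneg_right hr2ρ hnn
          have e : r⁻¹ * (C1*Ca1 + Ca*C2) = (r * (C1*Ca1 + Ca*C2)) * r⁻¹^2 := by
            field_simp
          rw [e]
          exact add_le_add_right (mul_le_mul_of_nonneg_right h2 hi2) _
      _ = (C1*Ca + 2*ρ*(C1*Ca1 + Ca*C2)) * r⁻¹^2 := by ring
    have ht2 : |fderiv ℝ (fun w : E3 => a k j w * χ (w - y)) x (EuclideanSpace.single k 1)
          * d1 (x - y) j| ≤ (Ca*C1 + C0*Ca1) * r⁻¹^2 := by
      rw [abs_mul]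
      have h := term2_bound χ (a k j) y x k hχ (haC k j)
      have hb : |a k j x| * ‖fderiv ℝ χ (x - y)‖ + |χ (x - y)| * ‖fderiv ℝ (a k j) x‖
          ≤ Ca*C1 + C0*Ca1 :=
        add_le_add (mul_le_mul (haB k j x hxB) (hdχS _ hzS) (norm_nonneg _) hCa)
          (mul_le_mul (hχS _ hzS) (hdaB k j x hxB) (norm_nonneg _) hC0)
      exact mul_le_mul (h.trans hb) (d1_bound hz j) (abs_nonneg _)
        (add_nonneg (mul_nonneg hCa hC1) (mul_nonneg hC0 hCa1))
    have ht3 : |a k j x * (χ (x - y) - 1) * d2 (x - y) k j| ≤ 4*Ca*(Lχ:ℝ) * r⁻¹^2 := by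
      rw [abs_mul, abs_mul]
      calc |a k j x| * |χ (x - y) - 1| * |d2 (x - y) k j|
          ≤ (Ca * ((Lχ:ℝ) * r)) * (4 * r⁻¹^3) := by
            apply mul_le_mul _ (d2_bound hz k j) (abs_nonneg _)
              (mul_nonneg hCa (mul_nonneg hLχ0 hr.le))
            exact mul_le_mul (haB k j x hxB) (hχ1bound (x - y)) (abs_nonneg _) hCa
      _ = 4*Ca*(Lχ:ℝ) * (r * r⁻¹^3) := by ring
      _ = 4*Ca*(Lχ:ℝ) * r⁻¹^2 := by rw [hrr3]
    refine le_trans (abs_add_le _ _) ?_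
    refine le_trans (add_le_add_left (abs_add_le _ _) _) ?_
    calc (|fderiv ℝ (fun w : E3 =>
          fderiv ℝ χ (w - y) (EuclideanSpace.single j 1) * a k j w / ‖w - y‖)
          x (EuclideanSpace.single k 1)|
        + |fderiv ℝ (fun w : E3 => a k j w * χ (w - y)) x (EuclideanSpace.single k 1)
            * d1 (x - y) j|)
        + |a k j x * (χ (x - y) - 1) * d2 (x - y) k j|
        ≤ ((C1*Ca + 2*ρ*(C1*Ca1 + Ca*C2)) * r⁻¹^2 + (Ca*C1 + C0*Ca1) * r⁻¹^2)
          + 4*Ca*(Lχ:ℝ) * r⁻¹^2 := add_le_add (add_le_add ht1 ht2) ht3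
    _ = M * r⁻¹^2 := by rw [hMdef]; ring
  -- sum bound
  have hsum : |∑ k : Fin 3, ∑ j : Fin 3,
      (fderiv ℝ (fun w : E3 =>
          fderiv ℝ χ (w - y) (EuclideanSpace.single j 1) * a k j w / ‖w - y‖)
          x (EuclideanSpace.single k 1)
        + fderiv ℝ (fun w : E3 => a k j w * χ (w - y)) x (EuclideanSpace.single k 1)
            * d1 (x - y) j
        + a k j x * (χ (x - y) - 1) * d2 (x - y) k j)| ≤ 9 * (M * r⁻¹^2) := by
    refine le_trans (Finset.abs_sum_le_sum_abs _ _) ?_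
    refine le_trans (Finset.sum_le_sum fun k _ =>
      le_trans (Finset.abs_sum_le_sum_abs _ _)
        (Finset.sum_le_sum fun j _ => hsummand k j)) ?_
    simp only [Finset.sum_const, Finset.card_univ, Fintype.card_fin, nsmul_eq_mul,
      Nat.cast_ofNat]
    linarith [mul_nonneg hM (sq_nonneg r⁻¹)]
  -- bound on the zeroth order term
  have hT4 : |ω ^ 2 * κ x * χ (x - y) / (4 * Real.pi * ‖x - y‖)|
      ≤ (1/(4*Real.pi)) * (ω^2*Cκ*C0*(2*ρ)) * r⁻¹^2 := by
    rw [abs_div, abs_mul, abs_mul]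
    have hden : |4 * Real.pi * ‖x - y‖| = 4 * Real.pi * r := abs_of_pos (by positivity)
    rw [hden]
    have hnum : |ω^2| * |κ x| * |χ (x - y)| ≤ ω^2 * Cκ * C0 := by
      rw [abs_of_nonneg (sq_nonneg ω)]
      exact mul_le_mul (mul_le_mul_of_nonneg_left (hκB x hxB) (sq_nonneg ω))
        (hχS _ hzS) (abs_nonneg _) (mul_nonneg (sq_nonneg ω) hCκ0)
    rw [div_le_iff₀ (by positivity)]
    have hge1 : (1:ℝ) ≤ (2*ρ) * r⁻¹ := by
      have h1 : r * r⁻¹ = 1 := mul_inv_cancel₀ hr.ne'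
      calc (1:ℝ) = r * r⁻¹ := h1.symm
      _ ≤ (2*ρ) * r⁻¹ := mul_le_mul_of_nonneg_right hr2ρ (by positivity)
    calc |ω^2| * |κ x| * |χ (x - y)| ≤ ω^2 * Cκ * C0 := hnum
    _ ≤ (ω^2 * Cκ * C0) * ((2*ρ) * r⁻¹) :=
        le_mul_of_one_le_right (mul_nonneg (mul_nonneg (sq_nonneg ω) hCκ0) hC0) hge1
    _ = (1/(4*Real.pi)) * (ω^2*Cκ*C0*(2*ρ)) * r⁻¹^2 * (4 * Real.pi * r) := by
        field_simp
  -- conclude for Rker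
  have hRker : |Rker a κ ω χ x y|
      ≤ (1/(4*Real.pi)) * (9*M + ω^2*Cκ*C0*(2*ρ)) * r⁻¹^2 := by
    rw [Rker]
    refine le_trans (abs_sub _ _) ?_
    have h1 : |(-(1 / (4 * Real.pi)) : ℝ) * ∑ k : Fin 3, ∑ j : Fin 3,
        (fderiv ℝ (fun w : E3 =>
            fderiv ℝ χ (w - y) (EuclideanSpace.single j 1) * a k j w / ‖w - y‖)
            x (EuclideanSpace.single k 1)
          + fderiv ℝ (fun w : E3 => a k j w * χ (w - y)) x (EuclideanSpace.single k 1)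
              * d1 (x - y) j
          + a k j x * (χ (x - y) - 1) * d2 (x - y) k j)|
        ≤ (1/(4*Real.pi)) * (9 * (M * r⁻¹^2)) := by
      rw [abs_mul, abs_neg, abs_of_pos hπ']
      exact mul_le_mul_of_nonneg_left hsum hπ'.le
    refine le_trans (add_le_add h1 hT4) ?_
    apply le_of_eq
    ring
  constructor
  · refine hRker.trans ?_
    have hstep : (1/(4*Real.pi)) * (9*M + ω^2*Cκ*C0*(2*ρ)) ≤ Cfin := by
      rw [hCfin]
      have h1 : (1/(4*Real.pi)) * (9*M + ω^2*Cκ*C0*(2*ρ))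
          ≤ (1/(4*Real.pi)) * (9*M + ω^2*Cκ*C0*(2*ρ) + 36*Ca1) :=
        mul_le_mul_of_nonneg_left (by linarith) hπ'.le
      linarith
    exact mul_le_mul_of_nonneg_right hstep (by positivity)
  · -- Rtker
    have hextra : |∑ k : Fin 3, ∑ j : Fin 3, (a k j x - a k j y) * d2 (x - y) k j|
        ≤ 9 * (4 * Ca1 * r⁻¹^2) := by
      have hterm : ∀ k j : Fin 3, |(a k j x - a k j y) * d2 (x - y) k j| ≤ 4 * Ca1 * r⁻¹^2 := by
        intro k j
        rw [abs_mul]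
        calc |a k j x - a k j y| * |d2 (x - y) k j|
            ≤ (Ca1 * r) * (4 * r⁻¹^3) :=
              mul_le_mul (haLip k j x hxB y hyB) (d2_bound hz k j) (abs_nonneg _)
                (mul_nonneg hCa1 hr.le)
        _ = 4 * Ca1 * (r * r⁻¹^3) := by ring
        _ = 4 * Ca1 * r⁻¹^2 := by rw [hrr3]
      refine le_trans (Finset.abs_sum_le_sum_abs _ _) ?_
      refine le_trans (Finset.sum_le_sum fun k _ =>
        le_trans (Finset.abs_sum_le_sum_abs _ _)
          (Finset.sum_le_sum fun j _ => hterm k j)) ?_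
      simp only [Finset.sum_const, Finset.card_univ, Fintype.card_fin, nsmul_eq_mul,
        Nat.cast_ofNat]
      linarith [mul_nonneg (mul_nonneg (by norm_num : (0:ℝ) ≤ 4) hCa1) (sq_nonneg r⁻¹)]
    rw [Rtker]
    refine le_trans (abs_sub _ _) ?_
    have h2 : |(1/(4*Real.pi)) * ∑ k : Fin 3, ∑ j : Fin 3,
        (a k j x - a k j y) * d2 (x - y) k j|
        ≤ (1/(4*Real.pi)) * (9 * (4 * Ca1 * r⁻¹^2)) := by
      rw [abs_mul, abs_of_pos hπ']
      exact mul_le_mul_of_nonneg_left hextra hπ'.le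
    refine le_trans (add_le_add hRker h2) ?_
    have hr2 : (0:ℝ) ≤ r⁻¹^2 := by positivity
    have e : (1/(4*Real.pi)) * (9*M + ω^2*Cκ*C0*(2*ρ)) * r⁻¹^2
        + (1/(4*Real.pi)) * (9 * (4 * Ca1 * r⁻¹^2))
        = ((1/(4*Real.pi)) * (9*M + ω^2*Cκ*C0*(2*ρ) + 36*Ca1)) * r⁻¹^2 := by ring
    rw [e, hCfin]
    exact mul_le_mul_of_nonneg_right (by linarith) hr2
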